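/- Let ℓ be an odd prime, m ≥ 1, and Y ∈ GL₂(Z/ℓ^{2m+1}Z) of the form Y = [[a + ℓ^m·x, b],[ℓ^{2m}·z, a + ℓ^m·w]] for integers a, x, b, z, w. If for every R ∈ 𝕂(ℓ^{2m+1}) the discriminant Δ(Y·R) is a square in Z/ℓ^{2m+1}Z, then (x − w) ≡ (z − b) (mod ℓ) or (x − w) ≡ −(z − b) (mod ℓ). -/

import Mathlib

/-- Membership in the group `𝕂(ℓ^(2m+1))`: matrices `[[r, s],[ℓ^(2m)·s, t]]` with
`r ≡ t (mod ℓ^(2m))`. -/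
def Kmem (ℓ m : ℕ) (g : Matrix (Fin 2) (Fin 2) (ZMod (ℓ ^ (2 * m + 1)))) : Prop :=
  ∃ r s t : ZMod (ℓ ^ (2 * m + 1)),
    g = !![r, s; (ℓ : ZMod (ℓ ^ (2 * m + 1))) ^ (2 * m) * s, t] ∧
    ZMod.castHom (pow_dvd_pow ℓ (by omega : 2 * m ≤ 2 * m + 1)) (ZMod (ℓ ^ (2 * m))) r =
      ZMod.castHom (pow_dvd_pow ℓ (by omega : 2 * m ≤ 2 * m + 1)) (ZMod (ℓ ^ (2 * m))) t

lemma sq_helper (p : ℕ) (hp : p.Prime) (m : ℕ) (S d : ℤ)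
    (h : (p : ℤ) ^ (2 * m + 1) ∣ S ^ 2 - (p : ℤ) ^ (2 * m) * d) :
    ∃ T : ℤ, (p : ℤ) ∣ T ^ 2 - d := by
  have hpne : (p : ℤ) ≠ 0 := by exact_mod_cast hp.ne_zero
  have h1 : (p : ℤ) ^ (2 * m) ∣ S ^ 2 := by
    have h2 : (p : ℤ) ^ (2 * m) ∣ S ^ 2 - (p : ℤ) ^ (2 * m) * d :=
      dvd_trans (pow_dvd_pow _ (by omega)) h
    have h3 := dvd_add h2 (Dvd.intro d rfl)
    simpa using h3
  have h2 : (p : ℤ) ^ m ∣ S := by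
    rw [show 2 * m = m * 2 by ring, pow_mul] at h1
    exact (Int.pow_dvd_pow_iff two_ne_zero).mp h1
  obtain ⟨T, hT⟩ := h2
  refine ⟨T, ?_⟩
  have h4 : S ^ 2 - (p : ℤ) ^ (2 * m) * d = (p : ℤ) ^ (2 * m) * (T ^ 2 - d) := by
    rw [hT]; ring
  have h5 : (p : ℤ) ^ (2 * m) * (p : ℤ) ∣ (p : ℤ) ^ (2 * m) * (T ^ 2 - d) := by
    rw [← pow_succ, ← h4]; exact h
  exact (mul_dvd_mul_iff_left (pow_ne_zero _ hpne)).mp h5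

/-- Let `Y ∈ GL₂(ℤ/ℓ^(2m+1)ℤ)` be `[[a + ℓᵐx, b],[ℓ^(2m)z, a + ℓᵐw]]`.
If `Δ(Y·R)` is a square for every `R ∈ 𝕂(ℓ^(2m+1))`, then `x - w ≡ ±(z - b) (mod ℓ)`. -/
theorem stmt_8 (ℓ m : ℕ) (hℓ : ℓ.Prime) (hℓodd : ℓ ≠ 2) (hm : 1 ≤ m)
    (Y : Matrix.GeneralLinearGroup (Fin 2) (ZMod (ℓ ^ (2 * m + 1))))
    (a x b z w : ℤ)
    (hY : Y.val = !![(a : ZMod (ℓ ^ (2 * m + 1))) + (ℓ : ZMod (ℓ ^ (2 * m + 1))) ^ m * (x : ZMod (ℓ ^ (2 * m + 1))),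
        (b : ZMod (ℓ ^ (2 * m + 1)));
        (ℓ : ZMod (ℓ ^ (2 * m + 1))) ^ (2 * m) * (z : ZMod (ℓ ^ (2 * m + 1))),
        (a : ZMod (ℓ ^ (2 * m + 1))) + (ℓ : ZMod (ℓ ^ (2 * m + 1))) ^ m * (w : ZMod (ℓ ^ (2 * m + 1)))])
    (hsq : ∀ R : Matrix.GeneralLinearGroup (Fin 2) (ZMod (ℓ ^ (2 * m + 1))),
      Kmem ℓ m R.val → ∃ s : ZMod (ℓ ^ (2 * m + 1)),
        (Matrix.trace (Y.val * R.val)) ^ 2 - 4 * (Y.val * R.val).det = s ^ 2) :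
    x - w ≡ z - b [ZMOD (ℓ : ℤ)] ∨ x - w ≡ -(z - b) [ZMOD (ℓ : ℤ)] := by
  haveI : Fact ℓ.Prime := ⟨hℓ⟩
  haveI : NeZero ℓ := ⟨hℓ.ne_zero⟩
  haveI : NeZero (ℓ ^ (2 * m + 1)) := ⟨pow_ne_zero _ hℓ.ne_zero⟩
  -- basic nilpotency facts
  have hLtop : (ℓ : ZMod (ℓ ^ (2 * m + 1))) ^ (2 * m + 1) = 0 := by
    have h := ZMod.natCast_self (ℓ ^ (2 * m + 1))
    push_cast at h
    exact h
  have hL3 : (ℓ : ZMod (ℓ ^ (2 * m + 1))) ^ (3 * m) = 0 := by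
    have hsplit : (ℓ : ZMod (ℓ ^ (2 * m + 1))) ^ (3 * m) =
        (ℓ : ZMod (ℓ ^ (2 * m + 1))) ^ (2 * m + 1) *
          (ℓ : ZMod (ℓ ^ (2 * m + 1))) ^ (3 * m - (2 * m + 1)) := by
      rw [← pow_add]; congr 1; omega
    rw [hsplit, hLtop, zero_mul]
  have hL4 : (ℓ : ZMod (ℓ ^ (2 * m + 1))) ^ (4 * m) = 0 := by
    have hsplit : (ℓ : ZMod (ℓ ^ (2 * m + 1))) ^ (4 * m) =
        (ℓ : ZMod (ℓ ^ (2 * m + 1))) ^ (2 * m + 1) *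
          (ℓ : ZMod (ℓ ^ (2 * m + 1))) ^ (4 * m - (2 * m + 1)) := by
      rw [← pow_add]; congr 1; omega
    rw [hsplit, hLtop, zero_mul]
  -- a is a unit mod ℓ
  set φ : ZMod (ℓ ^ (2 * m + 1)) →+* ZMod ℓ :=
    ZMod.castHom (dvd_pow_self ℓ (by omega : 2 * m + 1 ≠ 0)) (ZMod ℓ) with hφ
  have hYdet : IsUnit (Y.val).det := (Matrix.isUnit_iff_isUnit_det _).mp Y.isUnit
  have hmap : IsUnit (φ (Y.val).det) := hYdet.map φ
  have hdet2 : φ (Y.val).det = (a : ZMod ℓ) * (a : ZMod ℓ) := by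
    rw [hY, Matrix.det_fin_two_of]
    simp only [map_sub, map_mul, map_add, map_pow, map_intCast, map_natCast,
      ZMod.natCast_self]
    rw [zero_pow (by omega : m ≠ 0), zero_pow (by omega : 2 * m ≠ 0)]
    ring
  rw [hdet2] at hmap
  have ha : (a : ZMod ℓ) ≠ 0 := (isUnit_of_mul_isUnit_left hmap).ne_zero
  have h2ne : (2 : ZMod ℓ) ≠ 0 := by
    intro h
    have h2 : ℓ ∣ 2 := by
      have := (ZMod.natCast_eq_zero_iff 2 ℓ).mp (by exact_mod_cast h)
      exact this
    exact hℓodd ((Nat.prime_dvd_prime_iff_eq hℓ Nat.prime_two).mp h2)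
  -- main computation: for every integer s the discriminant value is a square mod ℓ
  have main : ∀ s : ℤ, ∃ u : ZMod ℓ,
      (((x - w) ^ 2 + 4 * b * z + 4 * a * s * (b + z) + 4 * a ^ 2 * s ^ 2 : ℤ) : ZMod ℓ) = u ^ 2 := by
    intro s
    have hnilL : IsNilpotent ((ℓ : ZMod (ℓ ^ (2 * m + 1))) ^ (2 * m)) := by
      refine ⟨2, ?_⟩
      rw [← pow_mul, show 2 * m * 2 = 4 * m by ring, hL4]
    have hnil : IsNilpotent ((s : ZMod (ℓ ^ (2 * m + 1))) *
        ((ℓ : ZMod (ℓ ^ (2 * m + 1))) ^ (2 * m) * (s : ZMod (ℓ ^ (2 * m + 1))))) := by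
      rw [show (s : ZMod (ℓ ^ (2 * m + 1))) * ((ℓ : ZMod (ℓ ^ (2 * m + 1))) ^ (2 * m) * s)
        = (ℓ : ZMod (ℓ ^ (2 * m + 1))) ^ (2 * m) * (s * s) by ring]
      exact (Commute.all _ _).isNilpotent_mul_right hnilL
    have hdetR : IsUnit (!![(1 : ZMod (ℓ ^ (2 * m + 1))), (s : ZMod (ℓ ^ (2 * m + 1)));
        (ℓ : ZMod (ℓ ^ (2 * m + 1))) ^ (2 * m) * s, 1]).det := by
      rw [Matrix.det_fin_two_of, one_mul]
      exact hnil.isUnit_one_sub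
    set R : Matrix.GeneralLinearGroup (Fin 2) (ZMod (ℓ ^ (2 * m + 1))) :=
      ((Matrix.isUnit_iff_isUnit_det _).mpr hdetR).unit with hR
    have hRval : R.val = !![(1 : ZMod (ℓ ^ (2 * m + 1))), (s : ZMod (ℓ ^ (2 * m + 1)));
        (ℓ : ZMod (ℓ ^ (2 * m + 1))) ^ (2 * m) * s, 1] := IsUnit.unit_spec _
    obtain ⟨s₀, hs₀⟩ := hsq R ⟨1, (s : ZMod (ℓ ^ (2 * m + 1))), 1, by rw [hRval], rfl⟩
    have key : s₀ ^ 2 = (ℓ : ZMod (ℓ ^ (2 * m + 1))) ^ (2 * m) *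
        (((x - w) ^ 2 + 4 * b * z + 4 * a * s * (b + z) + 4 * a ^ 2 * s ^ 2 : ℤ) :
          ZMod (ℓ ^ (2 * m + 1))) := by
      rw [← hs₀, hY, hRval, Matrix.mul_fin_two, Matrix.trace_fin_two_of, Matrix.det_fin_two_of]
      push_cast
      linear_combination
        (2 * ((x : ZMod (ℓ ^ (2 * m + 1))) + w) * s * ((b : ZMod (ℓ ^ (2 * m + 1))) + z)
          + 4 * (s : ZMod (ℓ ^ (2 * m + 1))) ^ 2 * a * ((x : ZMod (ℓ ^ (2 * m + 1))) + w)) * hL3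
        + ((s : ZMod (ℓ ^ (2 * m + 1))) ^ 2 * ((b : ZMod (ℓ ^ (2 * m + 1))) + z) ^ 2
          + 4 * (s : ZMod (ℓ ^ (2 * m + 1))) ^ 2 *
            ((x : ZMod (ℓ ^ (2 * m + 1))) * w - (b : ZMod (ℓ ^ (2 * m + 1))) * z)) * hL4
    have hdvd : (ℓ : ℤ) ^ (2 * m + 1) ∣ (s₀.val : ℤ) ^ 2 - (ℓ : ℤ) ^ (2 * m) * ((x - w) ^ 2 + 4 * b * z + 4 * a * s * (b + z) + 4 * a ^ 2 * s ^ 2) := by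
      have hz : ((((s₀.val : ℤ)) ^ 2 - (ℓ : ℤ) ^ (2 * m) * ((x - w) ^ 2 + 4 * b * z + 4 * a * s * (b + z) + 4 * a ^ 2 * s ^ 2) : ℤ) : ZMod (ℓ ^ (2 * m + 1))) = 0 := by
        rw [Int.cast_sub, Int.cast_pow, Int.cast_natCast, Int.cast_mul, Int.cast_pow,
          Int.cast_natCast, ZMod.natCast_val, ZMod.cast_id, key]
        exact sub_self _
      have := (ZMod.intCast_zmod_eq_zero_iff_dvd _ _).mp hz
      push_cast at this
      exact_mod_cast this
    obtain ⟨T, hT⟩ := sq_helper ℓ hℓ m (s₀.val : ℤ) ((x - w) ^ 2 + 4 * b * z + 4 * a * s * (b + z) + 4 * a ^ 2 * s ^ 2) hdvd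
    refine ⟨(T : ZMod ℓ), ?_⟩
    have hz2 : ((T ^ 2 - ((x - w) ^ 2 + 4 * b * z + 4 * a * s * (b + z) + 4 * a ^ 2 * s ^ 2) : ℤ) : ZMod ℓ) = 0 := by
      rw [ZMod.intCast_zmod_eq_zero_iff_dvd]
      exact_mod_cast hT
    rw [Int.cast_sub, Int.cast_pow, sub_eq_zero] at hz2
    exact hz2.symm
  -- all values c² + e are squares mod ℓ
  set e : ZMod ℓ := ((x : ZMod ℓ) - w) ^ 2 - ((b : ZMod ℓ) - z) ^ 2 with he
  have hall : ∀ c : ZMod ℓ, ∃ u : ZMod ℓ, c ^ 2 + e = u ^ 2 := by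
    intro c
    set σ : ZMod ℓ := (c - (b : ZMod ℓ) - (z : ZMod ℓ)) * (2 * (a : ZMod ℓ))⁻¹ with hσdef
    have h2a : (2 * (a : ZMod ℓ)) ≠ 0 := mul_ne_zero h2ne ha
    have hc : 2 * (a : ZMod ℓ) * σ = c - (b : ZMod ℓ) - (z : ZMod ℓ) := by
      rw [hσdef]
      field_simp
    obtain ⟨u, hu⟩ := main (σ.val : ℤ)
    refine ⟨u, ?_⟩
    have hσcast : (((σ.val : ℤ)) : ZMod ℓ) = σ := by
      rw [Int.cast_natCast, ZMod.natCast_val, ZMod.cast_id]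
    rw [← hu]
    push_cast [hσcast]
    rw [he]
    linear_combination (-(2 * (a : ZMod ℓ) * σ) - (b : ZMod ℓ) - z - c) * hc
  -- conclude e = 0
  have he0 : e = 0 := by
    by_contra hne
    have hk : ∀ n : ℕ, ∃ c : ZMod ℓ, (n : ZMod ℓ) * e = c ^ 2 := by
      intro n
      induction n with
      | zero => exact ⟨0, by simp⟩
      | succ k ih =>
        obtain ⟨c, hc⟩ := ih
        obtain ⟨u, hu⟩ := hall c
        refine ⟨u, ?_⟩
        push_cast
        linear_combination hc + hu
    have hsqall : ∀ f : ZMod ℓ, IsSquare f := by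
      intro f
      obtain ⟨c, hc⟩ := hk (f * e⁻¹).val
      rw [ZMod.natCast_val, ZMod.cast_id, inv_mul_cancel_right₀ hne] at hc
      exact ⟨c, by rw [hc, sq]⟩
    obtain ⟨v, hv⟩ := FiniteField.exists_nonsquare (F := ZMod ℓ)
      (by rw [ZMod.ringChar_zmod_n]; exact hℓodd)
    exact hv (hsqall v)
  have hfac : (((x : ZMod ℓ) - w) - ((z : ZMod ℓ) - b)) *
      (((x : ZMod ℓ) - w) + ((z : ZMod ℓ) - b)) = 0 := by
    rw [he] at he0
    linear_combination he0
  rcases mul_eq_zero.mp hfac with h | h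
  · left
    exact (ZMod.intCast_eq_intCast_iff _ _ _).mp (by push_cast; linear_combination h)
  · right
    exact (ZMod.intCast_eq_intCast_iff _ _ _).mp (by push_cast; linear_combination h)
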